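/- Let (å_k)_{k=−S}^{S} be real numbers, m ∈ ℕ with m ≥ 1, and φ ∈ ℝ. Define the m×m matrix L(φ) with entries L(φ)_{jk} = Σ_{ζ∈ℤ} å_{ζm+k−j} exp(iφ m ζ) (setting å_p = 0 for |p| > S), and let λ̊(ψ) = Σ_{k=−S}^{S} å_k exp(iψk). Then L(φ) = S_m(φ) · diag(λ̊(φ + 2πl/m), l = 0,…,m−1) · S_m(φ)^{-1}, where S_m(φ) is the unitary matrix with entries m^{-1/2} exp(2πi jk/m + iφ j). -/

import Mathlib

open Matrix Complex
open scoped Real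

private lemma conj_entry (m : ℕ) (φ : ℝ) (j k : ℕ) :
    (starRingEnd ℂ) (Complex.exp (2 * π * Complex.I * j * k / m + Complex.I * φ * j))
      = Complex.exp (-(2 * π * Complex.I * j * k / m + Complex.I * φ * j)) := by
  rw [← Complex.exp_conj]
  congr 1
  simp only [map_add, _root_.map_mul, map_div₀, Complex.conj_I, Complex.conj_ofReal,
    Complex.conj_natCast, map_ofNat]
  ring

private lemma aux_unitary (m : ℕ) (hm : 1 ≤ m) (φ : ℝ) :
    (Matrix.of fun j k : Fin m =>
        (1 / Real.sqrt m : ℂ) *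
          Complex.exp (2 * π * Complex.I * (j : ℕ) * (k : ℕ) / m + Complex.I * φ * (j : ℕ)))
    * (Matrix.of fun j k : Fin m =>
        (1 / Real.sqrt m : ℂ) *
          Complex.exp (2 * π * Complex.I * (j : ℕ) * (k : ℕ) / m + Complex.I * φ * (j : ℕ)))ᴴ
    = 1 := by
  have hm0 : (m : ℂ) ≠ 0 := Nat.cast_ne_zero.mpr (by omega)
  have hmR : (0:ℝ) < m := by exact_mod_cast hm
  have hc : ((1 / Real.sqrt m : ℂ)) * (1 / Real.sqrt m : ℂ) = 1 / (m:ℂ) := by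
    rw [div_mul_div_comm, one_mul, ← Complex.ofReal_mul, Real.mul_self_sqrt hmR.le]
    norm_num
  ext j k
  rw [Matrix.mul_apply, Matrix.one_apply]
  simp only [Matrix.conjTranspose_apply, Matrix.of_apply]
  have term : ∀ l : Fin m,
      ((1 / Real.sqrt m : ℂ) * Complex.exp (2 * π * Complex.I * (j:ℕ) * (l:ℕ) / m + Complex.I * φ * (j:ℕ)))
        * star ((1 / Real.sqrt m : ℂ) * Complex.exp (2 * π * Complex.I * (k:ℕ) * (l:ℕ) / m + Complex.I * φ * (k:ℕ)))
      = (1 / (m:ℂ)) * (Complex.exp (Complex.I * φ * (((j:ℕ):ℂ) - ((k:ℕ):ℂ)))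
          * Complex.exp (2 * π * Complex.I * (((j:ℕ):ℂ) - ((k:ℕ):ℂ)) / m) ^ (l:ℕ)) := by
    intro l
    rw [star_mul']
    rw [show star ((1 / Real.sqrt m : ℂ)) = (1 / Real.sqrt m : ℂ) by
      simp [Complex.star_def, map_div₀, Complex.conj_ofReal]]
    rw [show (star (Complex.exp (2 * π * Complex.I * (k:ℕ) * (l:ℕ) / m + Complex.I * φ * (k:ℕ))))
        = Complex.exp (-(2 * π * Complex.I * (k:ℕ) * (l:ℕ) / m + Complex.I * φ * (k:ℕ))) from
      conj_entry m φ k l]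
    rw [← Complex.exp_nat_mul, mul_mul_mul_comm, hc, ← Complex.exp_add, ← Complex.exp_add]
    congr 1
    field_simp
    ring
  rw [Finset.sum_congr rfl fun l _ => term l, ← Finset.mul_sum, ← Finset.mul_sum,
    Fin.sum_univ_eq_sum_range
      (fun i => Complex.exp (2 * π * Complex.I * (((j:ℕ):ℂ) - ((k:ℕ):ℂ)) / m) ^ i) m]
  by_cases hjk : j = k
  · subst hjk
    simp only [sub_self, mul_zero, Complex.exp_zero, one_pow, Finset.sum_const,
      Finset.card_range, nsmul_eq_mul, mul_one, if_pos rfl, zero_div, ↓reduceIte]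
    field_simp
  · rw [if_neg hjk]
    have hr1 : Complex.exp (2 * π * Complex.I * (((j:ℕ):ℂ) - ((k:ℕ):ℂ)) / m) ≠ 1 := by
      intro h
      rw [Complex.exp_eq_one_iff] at h
      obtain ⟨n, hn⟩ := h
      have h2πI : (2 * (π:ℂ) * Complex.I) ≠ 0 := by
        simp [Complex.I_ne_zero, Complex.ofReal_ne_zero, Real.pi_ne_zero]
      have hn' : 2 * (π:ℂ) * Complex.I * (((j:ℕ):ℂ) - ((k:ℕ):ℂ)) = (n:ℂ) * (2 * π * Complex.I) * m := by
        field_simp at hn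
        linear_combination (2 * (π:ℂ) * Complex.I) * hn
      have h2 : (((j:ℕ):ℂ) - ((k:ℕ):ℂ)) = (n:ℂ) * m := by
        apply mul_left_cancel₀ h2πI
        linear_combination hn'
      have h3 : ((j:ℕ):ℤ) - ((k:ℕ):ℤ) = n * m := by exact_mod_cast h2
      have hvne : ((j:ℕ):ℤ) - ((k:ℕ):ℤ) ≠ 0 := by
        have : (j:ℕ) ≠ (k:ℕ) := fun h => hjk (Fin.ext h)
        omega
      have hj : ((j:ℕ):ℤ) < m := by exact_mod_cast j.isLt
      have hk : ((k:ℕ):ℤ) < m := by exact_mod_cast k.isLt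
      have hdvd : (m:ℤ) ∣ (((j:ℕ):ℤ) - ((k:ℕ):ℤ)) := ⟨n, by rw [h3]; ring⟩
      have hle := Int.le_of_dvd (abs_pos.mpr hvne) ((dvd_abs _ _).mpr hdvd)
      have habs : |((j:ℕ):ℤ) - ((k:ℕ):ℤ)| < m := by
        rw [abs_sub_lt_iff]
        constructor <;> omega
      omega
    have hrm : Complex.exp (2 * π * Complex.I * (((j:ℕ):ℂ) - ((k:ℕ):ℂ)) / m) ^ m = 1 := by
      rw [← Complex.exp_nat_mul,
        show (m:ℂ) * (2 * π * Complex.I * (((j:ℕ):ℂ) - ((k:ℕ):ℂ)) / m)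
          = ((((j:ℕ):ℤ) - ((k:ℕ):ℤ) : ℤ):ℂ) * (2 * π * Complex.I) by push_cast; field_simp,
        Complex.exp_int_mul_two_pi_mul_I]
    rw [geom_sum_eq hr1 m, hrm, sub_self, zero_div, mul_zero, mul_zero]

private lemma aux_LS (S m : ℕ) (hm : 1 ≤ m) (a : ℤ → ℝ)
    (hsupp : ∀ p : ℤ, (S : ℤ) < |p| → a p = 0) (φ : ℝ) :
    (Matrix.of fun j k : Fin m =>
        ∑' ζ : ℤ, ((a (ζ * m + (k : ℕ) - (j : ℕ)) : ℂ) *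
          Complex.exp (Complex.I * φ * m * ζ)))
    * (Matrix.of fun j k : Fin m =>
        (1 / Real.sqrt m : ℂ) *
          Complex.exp (2 * π * Complex.I * (j : ℕ) * (k : ℕ) / m + Complex.I * φ * (j : ℕ)))
    = (Matrix.of fun j k : Fin m =>
        (1 / Real.sqrt m : ℂ) *
          Complex.exp (2 * π * Complex.I * (j : ℕ) * (k : ℕ) / m + Complex.I * φ * (j : ℕ)))
      * Matrix.diagonal (fun l : Fin m =>
          ∑ k ∈ Finset.Icc (-(S : ℤ)) (S : ℤ),
            (a k : ℂ) * Complex.exp (Complex.I * (φ + 2 * π * (l : ℕ) / m) * k)) := by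
  have hm0 : (m : ℂ) ≠ 0 := Nat.cast_ne_zero.mpr (by omega)
  have hmZ : (0:ℤ) < m := by exact_mod_cast hm
  have hmZ' : ((m:ℤ)) ≠ 0 := by omega
  set N : ℤ := (S:ℤ) + m with hNdef
  have hNm : N ≤ N * m := le_mul_of_one_le_right (by positivity) (by exact_mod_cast hm)
  ext j k
  rw [Matrix.mul_apply, Matrix.mul_diagonal]
  simp only [Matrix.of_apply]
  have hj' : ((j:ℕ):ℤ) < m := by exact_mod_cast j.isLt
  have hj0 : (0:ℤ) ≤ ((j:ℕ):ℤ) := by positivity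
  have htsum : ∀ l : Fin m,
      (∑' ζ : ℤ, ((a (ζ * m + (l:ℕ) - (j:ℕ)) : ℂ) * Complex.exp (Complex.I * φ * m * ζ)))
      = ∑ ζ ∈ Finset.Icc (-N) N,
          ((a (ζ * m + (l:ℕ) - (j:ℕ)) : ℂ) * Complex.exp (Complex.I * φ * m * ζ)) := by
    intro l
    apply tsum_eq_sum
    intro ζ hζ
    rw [Finset.mem_Icc, not_and_or, not_le, not_le] at hζ
    have hl0 : (0:ℤ) ≤ ((l:ℕ):ℤ) := by positivity
    have hl' : ((l:ℕ):ℤ) < m := by exact_mod_cast l.isLt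
    have ha : a (ζ * m + (l:ℕ) - (j:ℕ)) = 0 := by
      apply hsupp
      rcases hζ with h | h
      · -- ζ < -N
        have hz1 : ζ ≤ -1 := by omega
        have hzm : ζ * ((m:ℤ) - 1) ≤ 0 :=
          mul_nonpos_of_nonpos_of_nonneg (by linarith) (by omega)
        rw [lt_abs]
        right
        have : ζ * m ≤ ζ := by nlinarith
        linarith
      · -- N < ζ
        have hz1 : (1:ℤ) ≤ ζ := by omega
        have hzm : 0 ≤ ζ * ((m:ℤ) - 1) := mul_nonneg (by linarith) (by omega)
        rw [lt_abs]
        left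
        have : ζ ≤ ζ * m := by nlinarith
        linarith
    rw [ha]
    simp
  simp only [htsum]
  rw [Finset.mul_sum]
  have hsub : Finset.Icc (-(S:ℤ)) (S:ℤ) ⊆ Finset.Icc (-(N*m) - j) (N*m + ((m:ℤ)-1) - j) := by
    intro p hp
    rw [Finset.mem_Icc] at hp ⊢
    constructor <;> linarith [hp.1, hp.2]
  rw [Finset.sum_subset hsub (by
    intro p hp hnp
    rw [Finset.mem_Icc] at hnp
    have : a p = 0 := hsupp p (by rw [lt_abs]; omega)
    rw [this]
    simp)]
  simp only [Finset.sum_mul]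
  rw [← Finset.sum_product']
  refine Finset.sum_nbij'
    (fun q : Fin m × ℤ => q.2 * (m:ℤ) + ((q.1:ℕ):ℤ) - ((j:ℕ):ℤ))
    (fun p : ℤ => ((⟨((p + j) % m).toNat, by
        have h1 := Int.emod_nonneg (p + j) hmZ'
        have h2 := Int.emod_lt_of_pos (p + j) hmZ
        omega⟩ : Fin m), (p + j) / m))
    ?_ ?_ ?_ ?_ ?_
  · rintro ⟨l, ζ⟩ hq
    simp only [Finset.mem_product, Finset.mem_Icc, Finset.mem_univ, true_and] at hq ⊢
    have hl0 : (0:ℤ) ≤ ((l:ℕ):ℤ) := by positivity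
    have hl' : ((l:ℕ):ℤ) < m := by exact_mod_cast l.isLt
    have h1 : -N * m ≤ ζ * m := mul_le_mul_of_nonneg_right hq.1 hmZ.le
    have h2 : ζ * m ≤ N * m := mul_le_mul_of_nonneg_right hq.2 hmZ.le
    constructor <;> linarith
  · intro p hp
    simp only [Finset.mem_product, Finset.mem_Icc, Finset.mem_univ, true_and] at hp ⊢
    have e1 : ((m:ℤ) - 1 + N * m) / m = N := by
      rw [Int.add_mul_ediv_right _ _ hmZ',
        Int.ediv_eq_zero_of_lt (by omega) (by omega), zero_add]
    constructor
    · rw [Int.le_ediv_iff_mul_le hmZ]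
      linarith [hp.1]
    · calc (p + j) / m ≤ ((m:ℤ) - 1 + N * m) / m :=
            Int.ediv_le_ediv hmZ (by linarith [hp.2])
        _ = N := e1
  · rintro ⟨l, ζ⟩ hq
    have hl0 : (0:ℤ) ≤ ((l:ℕ):ℤ) := by positivity
    have hl' : ((l:ℕ):ℤ) < m := by exact_mod_cast l.isLt
    have harg : ζ * (m:ℤ) + ((l:ℕ):ℤ) - ((j:ℕ):ℤ) + ((j:ℕ):ℤ) = ((l:ℕ):ℤ) + ζ * m := by ring
    refine Prod.ext ?_ ?_
    · apply Fin.ext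
      simp only []
      rw [harg, Int.add_mul_emod_self_right, Int.emod_eq_of_lt hl0 hl']
      exact Int.toNat_natCast _
    · simp only []
      rw [harg, Int.add_mul_ediv_right _ _ hmZ',
        Int.ediv_eq_zero_of_lt hl0 hl', zero_add]
  · intro p hp
    simp only []
    have h1 := Int.emod_nonneg (p + j) hmZ'
    rw [Int.toNat_of_nonneg h1]
    linear_combination Int.mul_ediv_add_emod (p + j) m
  · rintro ⟨l, ζ⟩ hq
    simp only []
    have hexp : Complex.exp (Complex.I * φ * m * ζ)
          * Complex.exp (2 * π * Complex.I * (l:ℕ) * (k:ℕ) / m + Complex.I * φ * (l:ℕ))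
        = Complex.exp (2 * π * Complex.I * (j:ℕ) * (k:ℕ) / m + Complex.I * φ * (j:ℕ))
          * Complex.exp (Complex.I * (φ + 2 * π * (k:ℕ) / m)
              * ((ζ * (m:ℤ) + ((l:ℕ):ℤ) - ((j:ℕ):ℤ) : ℤ) : ℂ)) := by
      rw [← Complex.exp_add, ← Complex.exp_add]
      rw [show (2 * (π:ℂ) * Complex.I * (j:ℕ) * (k:ℕ) / m + Complex.I * φ * (j:ℕ))
            + Complex.I * (φ + 2 * π * (k:ℕ) / m)
              * ((ζ * (m:ℤ) + ((l:ℕ):ℤ) - ((j:ℕ):ℤ) : ℤ) : ℂ)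
          = (Complex.I * φ * m * ζ
              + (2 * π * Complex.I * (l:ℕ) * (k:ℕ) / m + Complex.I * φ * (l:ℕ)))
            + (((k:ℕ) * ζ : ℤ) : ℂ) * (2 * π * Complex.I) by
        push_cast
        field_simp
        ring]
      conv_rhs => rw [Complex.exp_add, Complex.exp_int_mul_two_pi_mul_I]
      rw [mul_one]
    calc ((a (ζ * m + (l:ℕ) - (j:ℕ)) : ℂ) * Complex.exp (Complex.I * φ * m * ζ))
          * ((1 / Real.sqrt m : ℂ)
            * Complex.exp (2 * π * Complex.I * (l:ℕ) * (k:ℕ) / m + Complex.I * φ * (l:ℕ)))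
        = ((a (ζ * m + (l:ℕ) - (j:ℕ)) : ℂ) * (1 / Real.sqrt m : ℂ))
            * (Complex.exp (Complex.I * φ * m * ζ)
              * Complex.exp (2 * π * Complex.I * (l:ℕ) * (k:ℕ) / m + Complex.I * φ * (l:ℕ))) := by
          ring
      _ = ((a (ζ * m + (l:ℕ) - (j:ℕ)) : ℂ) * (1 / Real.sqrt m : ℂ))
            * (Complex.exp (2 * π * Complex.I * (j:ℕ) * (k:ℕ) / m + Complex.I * φ * (j:ℕ))
              * Complex.exp (Complex.I * (φ + 2 * π * (k:ℕ) / m)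
                  * ((ζ * (m:ℤ) + ((l:ℕ):ℤ) - ((j:ℕ):ℤ) : ℤ) : ℂ))) := by
          rw [hexp]
      _ = (1 / Real.sqrt m : ℂ)
            * Complex.exp (2 * π * Complex.I * (j:ℕ) * (k:ℕ) / m + Complex.I * φ * (j:ℕ))
            * ((a (ζ * m + (l:ℕ) - (j:ℕ)) : ℂ)
              * Complex.exp (Complex.I * (φ + 2 * π * (k:ℕ) / m)
                  * ((ζ * (m:ℤ) + ((l:ℕ):ℤ) - ((j:ℕ):ℤ) : ℤ) : ℂ))) := by
          ring

theorem stmt_2 (S m : ℕ) (hm : 1 ≤ m) (a : ℤ → ℝ)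
    (hsupp : ∀ p : ℤ, (S : ℤ) < |p| → a p = 0) (φ : ℝ) :
    (Matrix.of fun j k : Fin m =>
        ∑' ζ : ℤ, ((a (ζ * m + (k : ℕ) - (j : ℕ)) : ℂ) *
          Complex.exp (Complex.I * φ * m * ζ)))
    = (Matrix.of fun j k : Fin m =>
        (1 / Real.sqrt m : ℂ) *
          Complex.exp (2 * π * Complex.I * (j : ℕ) * (k : ℕ) / m + Complex.I * φ * (j : ℕ)))
      * Matrix.diagonal (fun l : Fin m =>
          ∑ k ∈ Finset.Icc (-(S : ℤ)) (S : ℤ),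
            (a k : ℂ) * Complex.exp (Complex.I * (φ + 2 * π * (l : ℕ) / m) * k))
      * (Matrix.of fun j k : Fin m =>
          (1 / Real.sqrt m : ℂ) *
            Complex.exp (2 * π * Complex.I * (j : ℕ) * (k : ℕ) / m + Complex.I * φ * (j : ℕ)))⁻¹ := by
  have h1 := aux_unitary m hm φ
  rw [Matrix.inv_eq_right_inv h1]
  calc (Matrix.of fun j k : Fin m =>
        ∑' ζ : ℤ, ((a (ζ * m + (k : ℕ) - (j : ℕ)) : ℂ) *
          Complex.exp (Complex.I * φ * m * ζ)))
      = (Matrix.of fun j k : Fin m =>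
        ∑' ζ : ℤ, ((a (ζ * m + (k : ℕ) - (j : ℕ)) : ℂ) *
          Complex.exp (Complex.I * φ * m * ζ)))
        * ((Matrix.of fun j k : Fin m =>
        (1 / Real.sqrt m : ℂ) *
          Complex.exp (2 * π * Complex.I * (j : ℕ) * (k : ℕ) / m + Complex.I * φ * (j : ℕ)))
        * (Matrix.of fun j k : Fin m =>
        (1 / Real.sqrt m : ℂ) *
          Complex.exp (2 * π * Complex.I * (j : ℕ) * (k : ℕ) / m + Complex.I * φ * (j : ℕ)))ᴴ) := by
        rw [h1, mul_one]
    _ = _ := by rw [← Matrix.mul_assoc, aux_LS S m hm a hsupp φ]
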